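/- If (X, F) is a well-graded family and a ∈ X is essential, then the subgraphs of the one-inclusion graph G_F induced on {A ∈ F : a ∈ A} and on {A ∈ F : a ∉ A} are both connected. -/

import Mathlib

/-- The one-inclusion graph of a set system. -/
def oneInclusion {α : Type*} [DecidableEq α] (F : Finset (Finset α)) :
    SimpleGraph {A : Finset α // A ∈ F} where
  Adj A B := (symmDiff A.1 B.1).card = 1
  symm := by
    constructor
    intro A B h
    rwa [symmDiff_comm] at h
  loopless := by
    constructor
    intro A h
    simp [symmDiff_self] at h

/-- A set system is well-graded if the Hamming distance between any two members
equals their distance in the one-inclusion graph. -/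
def WellGraded {α : Type*} [DecidableEq α] (F : Finset (Finset α)) : Prop :=
  ∀ A B : {A : Finset α // A ∈ F},
    (oneInclusion F).dist A B = (symmDiff A.1 B.1).card

/-- If `(X, F)` is well-graded and `a` is essential, then the subgraphs of the
one-inclusion graph induced on the members containing `a`, and on the members
not containing `a`, are both connected. -/
lemma aux_reach {α : Type*} [DecidableEq α] {F : Finset (Finset α)} (hWG : WellGraded F)
    (a : α) (s : Set {A : Finset α // A ∈ F})
    (hs : ∀ A B : {A : Finset α // A ∈ F}, a ∉ symmDiff A.1 B.1 → A ∈ s → B ∈ s) :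
    ∀ (n : ℕ) (A B : {A : Finset α // A ∈ F}) (hA : A ∈ s) (hB : B ∈ s),
      a ∉ symmDiff A.1 B.1 → (symmDiff A.1 B.1).card = n →
      ((oneInclusion F).induce s).Reachable ⟨A, hA⟩ ⟨B, hB⟩ := by
  intro n
  induction n with
  | zero =>
    intro A B hA hB _ hcard
    have : A = B := by
      ext x
      have h0 : symmDiff A.1 B.1 = ∅ := Finset.card_eq_zero.mp hcard
      have := Finset.notMem_empty x
      rw [← h0, Finset.mem_symmDiff] at this
      tauto
    subst this
    rfl
  | succ n ih =>
    intro A B hA hB haAB hcard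
    -- A ≠ B and reachable in the big graph
    have hdist : (oneInclusion F).dist A B = n + 1 := by rw [hWG A B, hcard]
    have hreach : (oneInclusion F).Reachable A B :=
      SimpleGraph.Reachable.of_dist_ne_zero (by omega)
    obtain ⟨p, hp⟩ := hreach.exists_walk_length_eq_dist
    rw [hdist] at hp
    cases p with
    | nil => simp at hp
    | cons hadj q =>
      rename_i C
      simp only [SimpleGraph.Walk.length_cons, Nat.succ.injEq] at hp
      have hAC : (symmDiff A.1 C.1).card = 1 := hadj
      have hle : (symmDiff C.1 B.1).card ≤ n := by
        have := SimpleGraph.dist_le q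
        rw [hWG C B] at this
        omega
      obtain ⟨x, hx⟩ := Finset.card_eq_one.mp hAC
      have hAB : symmDiff A.1 B.1 = symmDiff ({x} : Finset α) (symmDiff C.1 B.1) := by
        rw [← hx, ← symmDiff_assoc, symmDiff_symmDiff_cancel_right]
      have hxS : x ∉ symmDiff C.1 B.1 := by
        intro hxin
        have hsub : symmDiff A.1 B.1 ⊆ (symmDiff C.1 B.1).erase x := by
          intro y hy
          rw [hAB, Finset.mem_symmDiff] at hy
          simp only [Finset.mem_singleton] at hy
          rcases hy with ⟨rfl, h⟩ | ⟨h1, h2⟩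
          · exact absurd hxin h
          · exact Finset.mem_erase.mpr ⟨h2, h1⟩
        have := Finset.card_le_card hsub
        have := Finset.card_erase_le (a := x) (s := symmDiff C.1 B.1)
        have hel := Finset.card_erase_of_mem hxin
        omega
      have hins : symmDiff A.1 B.1 = insert x (symmDiff C.1 B.1) := by
        rw [hAB]
        ext y
        rw [Finset.mem_symmDiff, Finset.mem_insert, Finset.mem_singleton]
        constructor
        · rintro (⟨rfl, _⟩ | ⟨h1, _⟩)
          · exact Or.inl rfl
          · exact Or.inr h1
        · rintro (rfl | h)
          · exact Or.inl ⟨rfl, hxS⟩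
          · exact Or.inr ⟨h, fun he => hxS (he ▸ h)⟩
      have hax : a ≠ x := by
        rintro rfl
        exact haAB (hins ▸ Finset.mem_insert_self a _)
      have haAC : a ∉ symmDiff A.1 C.1 := by
        rw [hx, Finset.mem_singleton]; exact hax
      have haCB : a ∉ symmDiff C.1 B.1 := fun h => haAB (hins ▸ Finset.mem_insert_of_mem h)
      have hC : C ∈ s := hs A C haAC hA
      have hcardCB : (symmDiff C.1 B.1).card = n := by
        have : (symmDiff A.1 B.1).card = (symmDiff C.1 B.1).card + 1 := by
          rw [hins, Finset.card_insert_of_notMem hxS]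
        omega
      have hedge : ((oneInclusion F).induce s).Adj ⟨A, hA⟩ ⟨C, hC⟩ := hadj
      exact (hedge.toWalk).reachable.trans (ih C B hC hB haCB hcardCB)

theorem induced_connected {α : Type*} [DecidableEq α]
    (F : Finset (Finset α)) (hWG : WellGraded F) (a : α)
    (h1 : ∃ A ∈ F, a ∈ A) (h2 : ∃ B ∈ F, a ∉ B) :
    ((oneInclusion F).induce {A : {A : Finset α // A ∈ F} | a ∈ A.1}).Connected ∧
    ((oneInclusion F).induce {A : {A : Finset α // A ∈ F} | a ∉ A.1}).Connected := by
  constructor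
  · obtain ⟨A, hAF, haA⟩ := h1
    haveI : Nonempty ↥{A : {A : Finset α // A ∈ F} | a ∈ A.1} := ⟨⟨⟨A, hAF⟩, haA⟩⟩
    refine ⟨?_⟩
    rintro ⟨u, hu⟩ ⟨v, hv⟩
    apply aux_reach hWG a _ ?_ (symmDiff u.1 v.1).card u v hu hv ?_ rfl
    · intro X Y hXY hX
      simp only [Set.mem_setOf_eq] at *
      rw [Finset.mem_symmDiff] at hXY
      tauto
    · rw [Finset.mem_symmDiff]
      simp only [Set.mem_setOf_eq] at hu hv
      tauto
  · obtain ⟨B, hBF, haB⟩ := h2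
    haveI : Nonempty ↥{A : {A : Finset α // A ∈ F} | a ∉ A.1} := ⟨⟨⟨B, hBF⟩, haB⟩⟩
    refine ⟨?_⟩
    rintro ⟨u, hu⟩ ⟨v, hv⟩
    apply aux_reach hWG a _ ?_ (symmDiff u.1 v.1).card u v hu hv ?_ rfl
    · intro X Y hXY hX
      simp only [Set.mem_setOf_eq] at *
      rw [Finset.mem_symmDiff] at hXY
      tauto
    · rw [Finset.mem_symmDiff]
      simp only [Set.mem_setOf_eq] at hu hv
      tauto
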